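/- Let ω, T be so(3)-valued 1-forms on a 3-manifold satisfying the flatness equations dω + ω∧ω − T∧T = 0 and dT + T∧ω + ω∧T = 0. Then Tr(ω³ − 3T²∧ω) = −3 Tr(ω∧dω + (2/3)ω³) and Tr(3ω²∧T − T³) = −4Tr(T³) − 3 d(Tr(T∧ω)). -/
import Mathlib


/-!
`so(3)`-valued forms on a 3-manifold, formalized abstractly by a differential
graded algebra `A` (matrix-valued forms) with scalar forms `S`, exterior
derivatives, trace and degree predicate.  Given `so(3)`-valued 1-forms `ω`, `T`
satisfying the zero-curvature equations `dω + ω∧ω − T∧T = 0` and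
`dT + T∧ω + ω∧T = 0`, one has
`Tr(ω³ − 3 T²∧ω) = −3 Tr(ω∧dω + (2/3)ω³)` and
`Tr(3ω²∧T − T³) = −4 Tr(T³) − 3 d(Tr(T∧ω))`.
-/
theorem stmt_11
    {A S : Type*} [Ring A] [Algebra ℂ A] [CommRing S] [Algebra ℂ S]
    (dA : A →ₗ[ℂ] A) (dS : S →ₗ[ℂ] S) (tr : A →ₗ[ℂ] S)
    (deg : A → ℕ → Prop)
    (hdeg_d : ∀ a k, deg a k → deg (dA a) (k + 1))
    (hdeg_mul : ∀ a b k l, deg a k → deg b l → deg (a * b) (k + l))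
    (hdd : ∀ a : A, dA (dA a) = 0)
    (hLeib : ∀ (a b : A) (k : ℕ), deg a k →
      dA (a * b) = dA a * b + ((-1 : ℂ) ^ k) • (a * dA b))
    (htr_cyc : ∀ (a b : A) (k l : ℕ), deg a k → deg b l →
      tr (a * b) = ((-1 : ℂ) ^ (k * l)) • tr (b * a))
    (htrd : ∀ a : A, dS (tr a) = tr (dA a))
    (ω T : A) (hω : deg ω 1) (hT : deg T 1)
    (hflat1 : dA ω + ω * ω - T * T = 0)
    (hflat2 : dA T + T * ω + ω * T = 0) :
    tr (ω * ω * ω - (3 : ℂ) • (T * T * ω))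
        = (-3 : ℂ) • (tr (ω * dA ω) + ((2 : ℂ) / 3) • tr (ω * ω * ω))
    ∧ tr ((3 : ℂ) • (ω * ω * T) - T * T * T)
        = (-4 : ℂ) • tr (T * T * T) - (3 : ℂ) • dS (tr (T * ω)) := by
  have hdω : dA ω = T * T - ω * ω := by
    rw [sub_eq_zero] at hflat1
    exact eq_sub_of_add_eq hflat1
  have hdT : dA T = -(T * ω) - ω * T := by
    have h := eq_sub_of_add_eq (eq_neg_of_add_eq_zero_left hflat2)
    rw [h]; abel
  have hc1 : tr (T * T * ω) = tr (ω * (T * T)) := by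
    simpa using htr_cyc (T * T) ω 2 1 (hdeg_mul T T 1 1 hT hT) hω
  have hc2 : tr (ω * T * ω) = tr (ω * (ω * T)) := by
    simpa using htr_cyc (ω * T) ω 2 1 (hdeg_mul ω T 1 1 hω hT) hω
  constructor
  · rw [hdω]
    have e1 : ω * (T * T - ω * ω) = ω * (T * T) - ω * ω * ω := by noncomm_ring
    simp only [e1, map_sub, map_smul, hc1]
    module
  · have hd : dS (tr (T * ω)) = tr (dA T * ω) - tr (T * dA ω) := by
      rw [htrd, hLeib T ω 1 hT, map_add, map_smul]
      module
    rw [hd, hdT, hdω]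
    have e2 : (-(T * ω) - ω * T) * ω = -(T * (ω * ω)) - ω * T * ω := by noncomm_ring
    have e3 : T * (T * T - ω * ω) = T * T * T - T * (ω * ω) := by noncomm_ring
    have e4 : ω * (ω * T) = ω * ω * T := by noncomm_ring
    simp only [e2, e3, map_sub, map_neg, map_smul, hc2, e4]
    module
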